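/- For a supercritical BPRE with p₀(ξ₀) = 0 a.s. and ℙ(Z₁ = 1 | Z₀ = 1) > 0, fix k ≥ 1 and r > 0. Then, as identities in [0, ∞], Σ_{j=k}^∞ j^{−r} · q_{k,j} = lim_{n→∞} ↑ 𝔼_k[Zₙ^{−r}]/γ_k^n, where the sequence 𝔼_k[Zₙ^{−r}]/γ_k^n is nondecreasing in n. -/

import Mathlib

open MeasureTheory ProbabilityTheory Filter
open scoped ENNReal Topology ProbabilityTheory

noncomputable section

/-- `convPow p i e j` is the probability that a sum of `i` i.i.d. random variables,
each distributed according to the offspring law `p · e`, equals `j`;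
i.e. the `i`-fold convolution of the offspring law determined by the environment
value `e`.  Thus `convPow p i e` is the quenched one-step transition law of a
branching process from state `i` under the environment value `e`. -/
def convPow {E : Type*} (p : ℕ → E → ℝ) : ℕ → E → ℕ → ℝ
  | 0, _, j => if j = 0 then 1 else 0
  | i + 1, e, j => ∑ l ∈ Finset.range (j + 1), convPow p i e l * p (j - l) e

/-- The canonical filtration on the trajectory space `ℕ → ℕ`:
`trajFiltration n` is the σ-algebra generated by the coordinates `0, …, n`. -/
def trajFiltration (n : ℕ) : MeasurableSpace (ℕ → ℕ) :=
  ⨆ i ∈ Finset.range (n + 1), MeasurableSpace.comap (fun z : ℕ → ℕ => z i) ⊤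

section convPowLemmas
variable {E : Type*} (p : ℕ → E → ℝ)

lemma convPow_nonneg (hp : ∀ i e, 0 ≤ p i e) : ∀ i e j, 0 ≤ convPow p i e j := by
  intro i
  induction i with
  | zero => intro e j; unfold convPow; split <;> norm_num
  | succ i ih =>
    intro e j
    unfold convPow
    exact Finset.sum_nonneg fun l _ => mul_nonneg (ih e l) (hp _ e)

lemma convPow_one (e : E) (j : ℕ) : convPow p 1 e j = p j e := by
  unfold convPow
  rw [Finset.sum_eq_single 0]
  · simp [convPow]
  · intro l hl hl0; simp [convPow, hl0]
  · simp

lemma convPow_eq_zero {e : E} (hp0 : p 0 e = 0) :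
    ∀ i j, j < i → convPow p i e j = 0 := by
  intro i
  induction i with
  | zero => omega
  | succ i ih =>
    intro j hj
    unfold convPow
    apply Finset.sum_eq_zero
    intro l hl
    simp only [Finset.mem_range] at hl
    rcases lt_or_ge l i with h | h
    · rw [ih l h, zero_mul]
    · have : j = l := by omega
      subst this
      simp [Nat.sub_self, hp0]

lemma convPow_diag {e : E} (hp0 : p 0 e = 0) :
    ∀ i, convPow p i e i = p 1 e ^ i := by
  intro i
  induction i with
  | zero => simp [convPow]
  | succ i ih =>
    unfold convPow
    rw [Finset.sum_eq_single i]
    · rw [ih]; rw [show i + 1 - i = 1 by omega]; ring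
    · intro l hl hli
      simp only [Finset.mem_range] at hl
      rcases lt_or_ge l i with h | h
      · rw [convPow_eq_zero p hp0 i l h, zero_mul]
      · have : l = i + 1 := by omega
        subst this
        simp [hp0]
    · intro h
      simp only [Finset.mem_range] at h
      omega

end convPowLemmas

section chainLemmas
variable {E : Type*} [MeasurableSpace E] (p : ℕ → E → ℝ)

/-- transition "matrix" entry -/
def matE (e : E) (i j : ℕ) : ℝ≥0∞ := ENNReal.ofReal (convPow p i e j)

/-- explicit chain probabilities: entry `(i,j)` of the product of transition matrices
along the environment values `e 0, …, e (n-1)`. -/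
def chainE (i : ℕ) (e : ℕ → E) : ℕ → ℕ → ℝ≥0∞
  | 0, j => if j = i then 1 else 0
  | n + 1, j => ∑' l, chainE i e n l * matE p (e n) l j

lemma convPow_meas (hp : ∀ i, Measurable (p i)) (i j : ℕ) :
    Measurable fun e => convPow p i e j := by
  induction i generalizing j with
  | zero => unfold convPow; exact measurable_const
  | succ i ih =>
    unfold convPow
    exact Finset.measurable_sum _ fun l _ => (ih l).mul (hp _)

lemma matE_meas (hp : ∀ i, Measurable (p i)) (i j : ℕ) :
    Measurable fun e => matE p e i j :=
  ENNReal.measurable_ofReal.comp (convPow_meas p hp i j)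

lemma chainE_meas (hp : ∀ i, Measurable (p i)) (i n j : ℕ) :
    Measurable fun e : ℕ → E => chainE p i e n j := by
  induction n generalizing j with
  | zero => unfold chainE; exact measurable_const
  | succ n ih =>
    unfold chainE
    exact Measurable.ennreal_tsum fun l =>
      (ih l).mul ((matE_meas p hp l j).comp (measurable_pi_apply n))

lemma chainE_congr {i n j : ℕ} {e e' : ℕ → E} (h : ∀ t < n, e t = e' t) :
    chainE p i e n j = chainE p i e' n j := by
  induction n generalizing j with
  | zero => rfl
  | succ n ih =>
    unfold chainE
    refine tsum_congr fun l => ?_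
    rw [ih fun t ht => h t (by omega), h n (by omega)]

lemma chainE_front (i n j : ℕ) (e : ℕ → E) :
    chainE p i e (n + 1) j
      = ∑' l, matE p (e 0) i l * chainE p l (fun t => e (t + 1)) n j := by
  induction n generalizing j with
  | zero =>
    unfold chainE
    unfold chainE
    rw [tsum_eq_single i (by intro l hl; simp [hl]),
      tsum_eq_single j (by intro l hl; simp [Ne.symm hl])]
    simp
  | succ n ih =>
    show (∑' l, chainE p i e (n+1) l * matE p (e (n+1)) l j) = _
    calc (∑' l, chainE p i e (n+1) l * matE p (e (n+1)) l j)
        = ∑' l, (∑' m, matE p (e 0) i m * chainE p m (fun t => e (t+1)) n l)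
            * matE p (e (n+1)) l j := by
          refine tsum_congr fun l => ?_; rw [ih]
      _ = ∑' l, ∑' m, matE p (e 0) i m * chainE p m (fun t => e (t+1)) n l
            * matE p (e (n+1)) l j := by
          refine tsum_congr fun l => ?_; rw [ENNReal.tsum_mul_right]
      _ = ∑' m, ∑' l, matE p (e 0) i m * chainE p m (fun t => e (t+1)) n l
            * matE p (e (n+1)) l j := ENNReal.tsum_comm
      _ = ∑' m, matE p (e 0) i m
            * ∑' l, chainE p m (fun t => e (t+1)) n l * matE p (e (n+1)) l j := by
          refine tsum_congr fun m => ?_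
          rw [← ENNReal.tsum_mul_left]
          refine tsum_congr fun l => ?_; ring
      _ = _ := by
          refine tsum_congr fun m => ?_
          rfl

lemma chainE_eq_zero {e : ℕ → E} (hp : ∀ i e, 0 ≤ p i e)
    (h0 : ∀ t, p 0 (e t) = 0) (i : ℕ) :
    ∀ n j, j < i → chainE p i e n j = 0 := by
  intro n
  induction n with
  | zero => intro j hj; unfold chainE; simp [show j ≠ i by omega]
  | succ n ih =>
    intro j hj
    unfold chainE
    refine ENNReal.tsum_eq_zero.2 fun l => ?_
    rcases lt_or_ge l i with h | h
    · rw [ih l h, zero_mul]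
    · have : j < l := by omega
      rw [show matE p (e n) l j = 0 by
        simp [matE, convPow_eq_zero p (h0 n) l j this], mul_zero]

end chainLemmas

lemma lintegral_comp_nat {α : Type*} [MeasurableSpace α] (μ : Measure α)
    {X : α → ℕ} (hX : Measurable X) (g : ℕ → ℝ≥0∞) :
    ∫⁻ a, g (X a) ∂μ = ∑' l, g l * μ (X ⁻¹' {l}) := by
  rw [← lintegral_map (measurable_from_top) hX, lintegral_countable']
  refine tsum_congr fun l => ?_
  rw [Measure.map_apply hX (measurableSet_singleton l)]

/-- A branching process in an i.i.d. random environment (BPRE).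
The environment is a sequence of i.i.d. random variables with values in `E`
(its law is the measure `μenv` on the sequence space), each value `e : E`
determining an offspring law `p · e` (i.e. a generating function
`f(e, t) = ∑ pᵢ(e) tⁱ`).  `K k` is the quenched law of the whole trajectory
`(Z_n)_{n ≥ 0}` of the branching process starting from `Z_0 = k`, given the
environment sequence: under `K k e`, `(Z_n)` starts at `k` and its one-step
conditional transition laws are the convolution powers `convPow p (Z_n) (e n)`
of the offspring laws — which is exactly the law of the process
`Z_{n+1} = ∑_{i=1}^{Z_n} N_{n,i}` where, conditionally on the environment, the
`N_{n,i}` (i ≥ 1) are i.i.d. with generating function `f(e n, ·)` and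
independent of `Z_n`. -/
structure BPRE (E : Type*) [MeasurableSpace E] where
  /-- the offspring distributions determined by an environment value -/
  p : ℕ → E → ℝ
  p_meas : ∀ i, Measurable (p i)
  p_nonneg : ∀ i e, 0 ≤ p i e
  p_tsum : ∀ e, ∑' i, p i e = 1
  /-- quenched law of the trajectory of `(Z_n)` with `Z_0 = k`, given the environment -/
  K : ℕ → Kernel (ℕ → E) (ℕ → ℕ)
  K_markov : ∀ k, IsMarkovKernel (K k)
  K_zero : ∀ k e, K k e {z | z 0 = k} = 1
  K_step : ∀ k e n j (A : Set (ℕ → ℕ)), MeasurableSet[trajFiltration n] A →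
    K k e ({z | z (n + 1) = j} ∩ A)
      = ∫⁻ z in A, ENNReal.ofReal (convPow p (z n) (e n) j) ∂(K k e)
  /-- the law of the i.i.d. environment sequence `ξ = (ξ₀, ξ₁, …)` -/
  μenv : Measure (ℕ → E)
  μenv_prob : IsProbabilityMeasure μenv
  μenv_iid : iIndepFun (fun n (e : ℕ → E) => e n) μenv
  μenv_ident : ∀ n, Measure.map (fun e : ℕ → E => e n) μenv
      = Measure.map (fun e : ℕ → E => e 0) μenv

namespace BPRE

variable {E : Type*} [MeasurableSpace E] (b : BPRE E)

/-- The law `ν` (that of `ξ₀`) of one environment component. -/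
def ν : Measure E := b.μenv.map fun e => e 0

/-- `m e` : the mean number of offspring `m₀ = ∑ i pᵢ(e)` of one individual under the
environment value `e`. -/
def m (e : E) : ℝ := ∑' i : ℕ, (i : ℝ) * b.p i e

/-- `Π_n = m₀ ⋯ m_{n-1}` along the environment sequence `e`. -/
def PiEnv (n : ℕ) (e : ℕ → E) : ℝ := ∏ j ∈ Finset.range n, b.m (e j)

/-- The annealed law `ℙ_k` of the pair (environment, trajectory) when `Z_0 = k`. -/
def P (k : ℕ) : Measure ((ℕ → E) × (ℕ → ℕ)) :=
  haveI := b.μenv_prob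
  haveI := b.K_markov k
  Measure.compProd b.μenv (b.K k)

/-- The annealed probability `ℙ_k (Z_n = j)`. -/
def probZ (k n j : ℕ) : ℝ := (b.P k {ω | ω.2 n = j}).toReal

/-- `γ_k = ℙ_k(Z_1 = k) = 𝔼[p₁(ξ₀)^k]`. -/
def γ (k : ℕ) : ℝ := ∫ e, b.p 1 (e 0) ^ k ∂b.μenv

/-- The normalized population limit `W = lim_n Z_n / Π_n` (defined via `limsup`, which
agrees a.s. with the limit of the nonnegative martingale `W_n = Z_n / Π_n`). -/
def W (ω : (ℕ → E) × (ℕ → ℕ)) : ℝ :=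
  limsup (fun n => (ω.2 n : ℝ) / b.PiEnv n ω.1) atTop

/-- The quenched limit variable `W` under a fixed environment sequence `e`. -/
def Wq (e : ℕ → E) (z : ℕ → ℕ) : ℝ :=
  limsup (fun n => (z n : ℝ) / b.PiEnv n e) atTop

/-- The quenched Laplace transform `φ_ξ(t) = 𝔼_ξ[e^{-tW}]` (with `Z_0 = 1`). -/
def phiq (e : ℕ → E) (t : ℝ) : ℝ := ∫ z, Real.exp (-t * b.Wq e z) ∂(b.K 1 e)

/-- The annealed Laplace transform `φ_k(t) = 𝔼_k[e^{-tW}]` (with `Z_0 = k`). -/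
def phi (k : ℕ) (t : ℝ) : ℝ := ∫ ω, Real.exp (-t * b.W ω) ∂(b.P k)

/-- Standing assumptions: the process is supercritical (`𝔼 log m₀ ∈ (0,∞)`) and each
individual gives birth to at least one child (`p₀(ξ₀) = 0` a.s.). -/
def Standing : Prop :=
  Integrable (fun e : ℕ → E => Real.log (b.m (e 0))) b.μenv ∧
  (0 < ∫ e, Real.log (b.m (e 0)) ∂b.μenv) ∧
  (∀ᵐ e ∂b.μenv, b.p 0 (e 0) = 0)

/-- The moment assumption `𝔼[(Z₁/m₀) log⁺ Z₁] < ∞`, which ensures `W_n → W` in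
`L¹(ℙ)` and `ℙ(W > 0) = 1`. -/
def ZlogZ : Prop :=
  Integrable (fun ω : (ℕ → E) × (ℕ → ℕ) =>
    ((ω.2 1 : ℝ) / b.m (ω.1 0)) * Real.log (max ((ω.2 1 : ℝ)) 1)) (b.P 1)

end BPRE

namespace BPREaux
variable {E : Type*} [MeasurableSpace E] (b : BPRE E)

lemma measurableSet_coordN (n j : ℕ) : MeasurableSet {z : ℕ → ℕ | z n = j} := by
  have h : {z : ℕ → ℕ | z n = j} = (fun z : ℕ → ℕ => z n) ⁻¹' {j} := rfl
  rw [h]; exact (measurable_pi_apply n) (measurableSet_singleton j)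

lemma K_apply_eq_chainE (k : ℕ) (e : ℕ → E) :
    ∀ n j, b.K k e {z | z n = j} = chainE b.p k e n j := by
  haveI := b.K_markov k
  intro n
  induction n with
  | zero =>
    intro j
    by_cases hj : j = k
    · rw [hj, b.K_zero k e]; simp [chainE]
    · have h1 : b.K k e {z | z 0 = j} ≤ b.K k e {z | z 0 = k}ᶜ := by
        apply measure_mono
        intro z hz
        simp only [Set.mem_setOf_eq] at hz
        simp [Set.mem_compl_iff, hz, hj]
      rw [measure_compl (measurableSet_coordN 0 k) (measure_ne_top _ _), b.K_zero k e]
      at h1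
      simp only [measure_univ] at h1
      simp only [tsub_self] at h1
      have : b.K k e {z | z 0 = j} = 0 := le_antisymm h1 (zero_le)
      rw [this]
      simp [chainE, hj]
  | succ n ih =>
    intro j
    have hstep := b.K_step k e n j Set.univ MeasurableSet.univ
    rw [Set.inter_univ] at hstep
    rw [hstep, Measure.restrict_univ,
      lintegral_comp_nat (b.K k e) (measurable_pi_apply n)
        (fun l => ENNReal.ofReal (convPow b.p l (e n) j))]
    show (∑' l, ENNReal.ofReal (convPow b.p l (e n) j)
        * b.K k e ((fun z => z n) ⁻¹' {l})) = chainE b.p k e (n+1) j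
    unfold chainE
    refine tsum_congr fun l => ?_
    have hpre : (fun z : ℕ → ℕ => z n) ⁻¹' {l} = {z | z n = l} := by
      ext z; simp
    rw [hpre, ih l, mul_comm]
    rfl

lemma P_apply_coord (k n j : ℕ) :
    b.P k {ω | ω.2 n = j} = ∫⁻ e, chainE b.p k e n j ∂b.μenv := by
  haveI := b.μenv_prob
  haveI := b.K_markov k
  have hms : MeasurableSet {ω : (ℕ → E) × (ℕ → ℕ) | ω.2 n = j} := by
    have h : {ω : (ℕ → E) × (ℕ → ℕ) | ω.2 n = j}
        = (fun ω : (ℕ → E) × (ℕ → ℕ) => ω.2 n) ⁻¹' {j} := rfl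
    rw [h]; exact ((measurable_pi_apply n).comp measurable_snd) (measurableSet_singleton j)
  rw [BPRE.P, Measure.compProd_apply hms]
  refine lintegral_congr fun e => ?_
  have : Prod.mk e ⁻¹' {ω : (ℕ → E) × (ℕ → ℕ) | ω.2 n = j} = {z | z n = j} := rfl
  rw [this, K_apply_eq_chainE]

lemma P_ne_top (k : ℕ) (s : Set ((ℕ → E) × (ℕ → ℕ))) : b.P k s ≠ ⊤ := by
  haveI := b.μenv_prob
  haveI := b.K_markov k
  rw [BPRE.P]
  exact measure_ne_top _ _

end BPREaux

namespace BPREaux2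
variable {E : Type*} [MeasurableSpace E] (b : BPRE E)

lemma nu_prob : IsProbabilityMeasure b.ν := by
  haveI := b.μenv_prob
  exact Measure.isProbabilityMeasure_map (measurable_pi_apply 0).aemeasurable

lemma window_meas (n : ℕ) : Measurable fun (e : ℕ → E) (i : Fin n) => e (i : ℕ) :=
  measurable_pi_lambda _ fun i => measurable_pi_apply _

lemma coord_map (t : ℕ) {B : Set E} (hB : MeasurableSet B) :
    b.μenv ((fun e : ℕ → E => e t) ⁻¹' B) = b.ν B := by
  rw [← Measure.map_apply (measurable_pi_apply t) hB, b.μenv_ident t, BPRE.ν]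

lemma map_window (n : ℕ) :
    b.μenv.map (fun (e : ℕ → E) (i : Fin n) => e (i : ℕ))
      = Measure.pi fun _ : Fin n => b.ν := by
  haveI := b.μenv_prob
  haveI := nu_prob b
  refine (Measure.pi_eq fun S hS => ?_).symm
  rw [Measure.map_apply (window_meas n) (MeasurableSet.univ_pi hS)]
  classical
  set A : ℕ → Set E := fun t => if h : t < n then S ⟨t, h⟩ else Set.univ with hA
  have hAm : ∀ t, MeasurableSet (A t) := by
    intro t
    by_cases h : t < n <;> simp [hA, h, hS]
  have hpre : (fun (e : ℕ → E) (i : Fin n) => e (i : ℕ)) ⁻¹' Set.univ.pi S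
      = ⋂ t ∈ Finset.range n, (fun e : ℕ → E => e t) ⁻¹' A t := by
    ext e
    simp only [Set.mem_preimage, Set.mem_univ_pi, Set.mem_iInter, Finset.mem_range, hA]
    constructor
    · intro h t ht
      simp only [Set.mem_preimage, dif_pos ht]
      exact h ⟨t, ht⟩
    · intro h i
      have := h i i.isLt
      simpa only [Set.mem_preimage, dif_pos i.isLt] using this
  rw [hpre]
  rw [b.μenv_iid.meas_biInter (S := Finset.range n)
    (s := fun t => (fun e : ℕ → E => e t) ⁻¹' A t)
    (fun t _ => ⟨A t, hAm t, rfl⟩)]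
  have : ∀ t ∈ Finset.range n, b.μenv ((fun e : ℕ → E => e t) ⁻¹' A t) = b.ν (A t) :=
    fun t _ => coord_map b t (hAm t)
  rw [Finset.prod_congr rfl this,
    ← Fin.prod_univ_eq_prod_range (fun t => b.ν (A t))]
  exact Finset.prod_congr rfl fun i _ => by simp [hA, i.isLt]

end BPREaux2

namespace BPREaux3
open BPREaux2
variable {E : Type*} [MeasurableSpace E]

lemma nonempty_E (b : BPRE E) : Nonempty E := by
  haveI := b.μenv_prob
  by_contra h
  rw [not_nonempty_iff] at h
  haveI : IsEmpty (ℕ → E) := ⟨fun f => h.elim (f 0)⟩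
  have h1 : b.μenv Set.univ = 1 := measure_univ
  rw [Set.univ_eq_empty_iff.2 (by infer_instance), measure_empty] at h1
  exact zero_ne_one h1

def ext' (d : E) (n : ℕ) (v : Fin n → E) : ℕ → E :=
  fun t => if h : t < n then v ⟨t, h⟩ else d

lemma ext'_meas (d : E) (n : ℕ) : Measurable (ext' d n) := by
  apply measurable_pi_lambda
  intro t
  unfold ext'
  by_cases h : t < n
  · simp only [dif_pos h]; exact measurable_pi_apply _
  · simp only [dif_neg h]; exact measurable_const

lemma lintegral_chain_pi (b : BPRE E) (d : E) (i n j : ℕ) :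
    ∫⁻ e, chainE b.p i e n j ∂b.μenv
      = ∫⁻ v, chainE b.p i (ext' d n v) n j
          ∂(Measure.pi fun _ : Fin n => b.ν) := by
  have hΦ : Measurable fun v : Fin n → E => chainE b.p i (ext' d n v) n j :=
    (chainE_meas b.p b.p_meas i n j).comp (ext'_meas d n)
  rw [← map_window b n, lintegral_map hΦ (window_meas n)]
  refine lintegral_congr fun e => ?_
  exact (chainE_congr b.p fun t ht => by simp [ext', ht]).symm

lemma lintegral_split (b : BPRE E) (k n j : ℕ) :
    ∫⁻ e, matE b.p (e 0) k k * chainE b.p k (fun t => e (t + 1)) n j ∂b.μenv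
      = (∫⁻ x, matE b.p x k k ∂b.ν) * ∫⁻ e, chainE b.p k e n j ∂b.μenv := by
  haveI := nu_prob b
  obtain ⟨d⟩ := nonempty_E b
  set T := MeasurableEquiv.piFinSuccAbove (fun _ : Fin (n + 1) => E) 0 with hT
  set Φ : (Fin n → E) → ℝ≥0∞ := fun v => chainE b.p k (ext' d n v) n j with hΦdef
  have hΦ : Measurable Φ := (chainE_meas b.p b.p_meas k n j).comp (ext'_meas d n)
  set g : E × (Fin n → E) → ℝ≥0∞ := fun x => matE b.p x.1 k k * Φ x.2 with hgdef
  have hg : Measurable g :=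
    ((matE_meas b.p b.p_meas k k).comp measurable_fst).mul (hΦ.comp measurable_snd)
  have hgT : Measurable fun v : Fin (n + 1) → E => g (T v) := hg.comp T.measurable
  have hTapp : ∀ w : Fin (n + 1) → E,
      T w = (w 0, fun i => w ((0 : Fin (n + 1)).succAbove i)) := fun w => rfl
  have step1 : ∀ e : ℕ → E,
      matE b.p (e 0) k k * chainE b.p k (fun t => e (t + 1)) n j
        = g (T (fun i : Fin (n + 1) => e (i : ℕ))) := by
    intro e
    rw [hTapp]
    simp only [hgdef, hΦdef]
    congr 1
    refine chainE_congr b.p fun t ht => ?_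
    simp only [ext', dif_pos ht]
    show e (t + 1) = e (((0 : Fin (n + 1)).succAbove ⟨t, ht⟩ : Fin (n + 1)) : ℕ)
    congr 1
  calc ∫⁻ e, matE b.p (e 0) k k * chainE b.p k (fun t => e (t + 1)) n j ∂b.μenv
      = ∫⁻ e, g (T (fun i : Fin (n + 1) => e (i : ℕ))) ∂b.μenv :=
        lintegral_congr step1
    _ = ∫⁻ v, g (T v) ∂(Measure.pi fun _ : Fin (n + 1) => b.ν) := by
        rw [← map_window b (n + 1), lintegral_map hgT (window_meas (n + 1))]
    _ = ∫⁻ x, g x ∂((b.ν).prod (Measure.pi fun _ : Fin n => b.ν)) :=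
        (measurePreserving_piFinSuccAbove (fun _ : Fin (n + 1) => b.ν) 0).lintegral_comp hg
    _ = (∫⁻ x, matE b.p x k k ∂b.ν) * ∫⁻ v, Φ v ∂(Measure.pi fun _ : Fin n => b.ν) :=
        lintegral_prod_mul (matE_meas b.p b.p_meas k k).aemeasurable hΦ.aemeasurable
    _ = _ := by rw [← lintegral_chain_pi b d k n j]

end BPREaux3

namespace BPREaux4
open BPREaux BPREaux2 BPREaux3
variable {E : Type*} [MeasurableSpace E]

lemma p_summable (b : BPRE E) (x : E) : Summable fun i => b.p i x := by
  by_contra h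
  have h0 := tsum_eq_zero_of_not_summable h
  rw [b.p_tsum x] at h0
  exact one_ne_zero h0

lemma p_le_one (b : BPRE E) (i : ℕ) (x : E) : b.p i x ≤ 1 := by
  have h := Summable.le_tsum (p_summable b x) i fun j _ => b.p_nonneg j x
  rwa [b.p_tsum x] at h

lemma integrable_p1pow (b : BPRE E) (k : ℕ) :
    Integrable (fun e : ℕ → E => b.p 1 (e 0) ^ k) b.μenv := by
  haveI := b.μenv_prob
  have hm : Measurable fun e : ℕ → E => b.p 1 (e 0) ^ k :=
    ((b.p_meas 1).comp (measurable_pi_apply 0)).pow_const k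
  refine ⟨hm.aestronglyMeasurable, ?_⟩
  apply HasFiniteIntegral.of_bounded (C := 1)
  refine ae_of_all _ fun e => ?_
  rw [Real.norm_eq_abs, abs_of_nonneg (pow_nonneg (b.p_nonneg 1 (e 0)) k)]
  exact pow_le_one₀ (b.p_nonneg 1 (e 0)) (p_le_one b 1 (e 0))

lemma ofReal_gamma (b : BPRE E) (k : ℕ) :
    ENNReal.ofReal (b.γ k) = ∫⁻ e, ENNReal.ofReal (b.p 1 (e 0) ^ k) ∂b.μenv := by
  rw [BPRE.γ]
  exact ofReal_integral_eq_lintegral_ofReal (integrable_p1pow b k)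
    (ae_of_all _ fun e => pow_nonneg (b.p_nonneg 1 (e 0)) k)

lemma gamma_nonneg (b : BPRE E) (k : ℕ) : 0 ≤ b.γ k :=
  integral_nonneg fun e => pow_nonneg (b.p_nonneg 1 (e 0)) k

lemma nu_matE (b : BPRE E) (hp0 : ∀ᵐ e ∂b.μenv, b.p 0 (e 0) = 0) (k : ℕ) :
    ∫⁻ x, matE b.p x k k ∂b.ν = ENNReal.ofReal (b.γ k) := by
  rw [BPRE.ν, lintegral_map (matE_meas b.p b.p_meas k k) (measurable_pi_apply 0),
    ofReal_gamma b k]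
  refine lintegral_congr_ae ?_
  filter_upwards [hp0] with e he
  rw [matE, convPow_diag b.p he k]

lemma gamma_pos (b : BPRE E) (hZ11 : 0 < b.probZ 1 1 1) (k : ℕ) (hk : k ≠ 0) :
    0 < b.γ k := by
  rcases eq_or_lt_of_le (gamma_nonneg b k) with h | h
  · exfalso
    have hLk : ∫⁻ e, ENNReal.ofReal (b.p 1 (e 0) ^ k) ∂b.μenv = 0 := by
      rw [← ofReal_gamma, ← h, ENNReal.ofReal_zero]
    have hm : Measurable fun e : ℕ → E => ENNReal.ofReal (b.p 1 (e 0) ^ k) :=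
      ENNReal.measurable_ofReal.comp (((b.p_meas 1).comp (measurable_pi_apply 0)).pow_const k)
    rw [lintegral_eq_zero_iff hm] at hLk
    have h1 : (fun e : ℕ → E => ENNReal.ofReal (b.p 1 (e 0))) =ᵐ[b.μenv] 0 := by
      filter_upwards [hLk] with e he
      simp only [Pi.zero_apply, ENNReal.ofReal_eq_zero] at he ⊢
      have hk0 : b.p 1 (e 0) ^ k = 0 :=
        le_antisymm he (pow_nonneg (b.p_nonneg 1 (e 0)) k)
      have := pow_eq_zero_iff hk |>.1 hk0
      simp [this]
    have hP : b.P 1 {ω : (ℕ → E) × (ℕ → ℕ) | ω.2 1 = 1}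
        = ∫⁻ e, ENNReal.ofReal (b.p 1 (e 0)) ∂b.μenv := by
      rw [P_apply_coord b 1 1 1]
      refine lintegral_congr fun e => ?_
      show chainE b.p 1 e 1 1 = _
      unfold chainE
      rw [tsum_eq_single 1 (fun l hl => by simp [chainE, hl])]
      simp [chainE, matE, convPow_one]
    rw [BPRE.probZ, hP, lintegral_congr_ae h1] at hZ11
    simp at hZ11
  · exact h

lemma ae_p0_all (b : BPRE E) (h : ∀ᵐ e ∂b.μenv, b.p 0 (e 0) = 0) :
    ∀ᵐ e ∂b.μenv, ∀ t, b.p 0 (e t) = 0 := by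
  rw [ae_all_iff]
  intro t
  have hBc : MeasurableSet {x : E | ¬ b.p 0 x = 0} := by
    have h1 : {x : E | ¬ b.p 0 x = 0} = ((b.p 0) ⁻¹' {0})ᶜ := rfl
    rw [h1]
    exact ((b.p_meas 0) (measurableSet_singleton 0)).compl
  have h0 : b.μenv ((fun e : ℕ → E => e 0) ⁻¹' {x | ¬ b.p 0 x = 0}) = 0 := ae_iff.1 h
  rw [ae_iff]
  show b.μenv ((fun e : ℕ → E => e t) ⁻¹' {x | ¬ b.p 0 x = 0}) = 0
  rw [coord_map b t hBc, ← coord_map b 0 hBc, h0]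

lemma chain_vanish (b : BPRE E) (hp0 : ∀ᵐ e ∂b.μenv, b.p 0 (e 0) = 0)
    (i n j : ℕ) (hj : j < i) :
    ∫⁻ e, chainE b.p i e n j ∂b.μenv = 0 := by
  have hae : (fun e => chainE b.p i e n j) =ᵐ[b.μenv] 0 := by
    filter_upwards [ae_p0_all b hp0] with e he
    exact chainE_eq_zero b.p b.p_nonneg he i n j hj
  rw [lintegral_congr_ae hae]
  simp

lemma key_ineq (b : BPRE E) (hp0 : ∀ᵐ e ∂b.μenv, b.p 0 (e 0) = 0) (k n j : ℕ) :
    ENNReal.ofReal (b.γ k) * ∫⁻ e, chainE b.p k e n j ∂b.μenv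
      ≤ ∫⁻ e, chainE b.p k e (n + 1) j ∂b.μenv := by
  rw [← nu_matE b hp0 k, ← lintegral_split b k n j]
  refine lintegral_mono fun e => ?_
  rw [chainE_front]
  exact ENNReal.le_tsum k

end BPREaux4

open BPREaux BPREaux2 BPREaux3 BPREaux4 in
/-- **Normalized harmonic moments and the coefficients `q_{k,j}` (identity in `[0,∞]`).**
For a supercritical BPRE with `p₀(ξ₀) = 0` a.s. and `ℙ(Z₁ = 1 | Z₀ = 1) > 0`, fix
`k ≥ 1` and `r > 0`, and let `q j = q_{k,j} = lim_n ℙ_k(Z_n = j)/γ_k ^ n` for `j ≥ k`.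
Then the sequence `n ↦ 𝔼_k[Z_n ^ (-r)]/γ_k ^ n` is nondecreasing and, as identities in
`[0,∞]`, `∑_{j ≥ k} j ^ (-r) * q_{k,j} = lim_n ↑ 𝔼_k[Z_n ^ (-r)]/γ_k ^ n`. -/
theorem sum_q_eq_limit_normalized_harmonic_moments {E : Type*} [MeasurableSpace E]
    (b : BPRE E)
    (hstand : b.Standing) (hZ11 : 0 < b.probZ 1 1 1)
    (k : ℕ) (hk : 1 ≤ k) (r : ℝ) (hr : 0 < r)
    (q : ℕ → ℝ)
    (hq : ∀ j, k ≤ j → Tendsto (fun n => b.probZ k n j / b.γ k ^ n) atTop (𝓝 (q j))) :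
    Monotone (fun n => (∫⁻ ω, ENNReal.ofReal ((ω.2 n : ℝ) ^ (-r)) ∂b.P k)
        / ENNReal.ofReal (b.γ k ^ n)) ∧
      Tendsto (fun n => (∫⁻ ω, ENNReal.ofReal ((ω.2 n : ℝ) ^ (-r)) ∂b.P k)
          / ENNReal.ofReal (b.γ k ^ n)) atTop
        (𝓝 (∑' j : ℕ, if k ≤ j then ENNReal.ofReal ((j : ℝ) ^ (-r) * q j) else 0)) := by
  classical
  haveI := b.μenv_prob
  haveI := b.K_markov k
  obtain ⟨hint, hpos, hp0⟩ := hstand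
  have hγpos : 0 < b.γ k := gamma_pos b hZ11 k (by omega)
  set γ : ℝ := b.γ k with hγ
  set g : ℝ≥0∞ := ENNReal.ofReal γ with hg
  have hg0 : g ≠ 0 := by
    simp only [hg, ne_eq, ENNReal.ofReal_eq_zero, not_le]
    exact hγpos
  have hgtop : g ≠ ⊤ := ENNReal.ofReal_ne_top
  set PZ : ℕ → ℕ → ℝ≥0∞ := fun n j => ∫⁻ e, chainE b.p k e n j ∂b.μenv with hPZ
  have hPcoord : ∀ n j, b.P k {ω : (ℕ → E) × (ℕ → ℕ) | ω.2 n = j} = PZ n j :=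
    fun n j => P_apply_coord b k n j
  have hPZ_ne_top : ∀ n j, PZ n j ≠ ⊤ := fun n j => by
    rw [← hPcoord]; exact P_ne_top b k _
  have hkey : ∀ n j, g * PZ n j ≤ PZ (n + 1) j := fun n j => key_ineq b hp0 k n j
  have hvanish : ∀ n j, j < k → PZ n j = 0 := fun n j hj => chain_vanish b hp0 k n j hj
  set c : ℕ → ℝ≥0∞ := fun j => ENNReal.ofReal ((j : ℝ) ^ (-r)) with hc
  have hform : ∀ n, (∫⁻ ω, ENNReal.ofReal ((ω.2 n : ℝ) ^ (-r)) ∂b.P k)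
      = ∑' j, c j * PZ n j := by
    intro n
    have hX : Measurable fun ω : (ℕ → E) × (ℕ → ℕ) => ω.2 n :=
      (measurable_pi_apply n).comp measurable_snd
    rw [lintegral_comp_nat (b.P k) hX (fun j => ENNReal.ofReal ((j : ℝ) ^ (-r)))]
    refine tsum_congr fun j => ?_
    rw [← hPcoord n j]
    rfl
  have hgpow : ∀ n, ENNReal.ofReal (γ ^ n) = g ^ n := fun n => by
    rw [hg, ← ENNReal.ofReal_pow hγpos.le]
  set a : ℕ → ℕ → ℝ≥0∞ := fun n j => c j * PZ n j / g ^ n with ha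
  have hIdef : ∀ n, (∫⁻ ω, ENNReal.ofReal ((ω.2 n : ℝ) ^ (-r)) ∂b.P k)
      / ENNReal.ofReal (b.γ k ^ n) = ∑' j, a n j := by
    intro n
    rw [hform n, ← hγ, hgpow n, div_eq_mul_inv, ← ENNReal.tsum_mul_right]
    refine tsum_congr fun j => ?_
    simp only [ha, div_eq_mul_inv]
  have hamono : ∀ j, Monotone fun n => a n j := by
    intro j
    apply monotone_nat_of_le_succ
    intro n
    rcases lt_or_ge j k with hj | hj
    · simp [ha, hvanish n j hj, hvanish (n + 1) j hj]
    · have hgn0 : (g : ℝ≥0∞) ^ n ≠ 0 := pow_ne_zero n hg0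
      have hgntop : (g : ℝ≥0∞) ^ n ≠ ⊤ := ENNReal.pow_ne_top hgtop
      have h1 : c j * PZ n j ≤ c j * PZ (n + 1) j / g := by
        rw [ENNReal.le_div_iff_mul_le (Or.inl hg0) (Or.inl hgtop)]
        calc c j * PZ n j * g = c j * (g * PZ n j) := by ring
          _ ≤ c j * PZ (n + 1) j := mul_le_mul_right (hkey n j) _
      calc c j * PZ n j / g ^ n ≤ (c j * PZ (n + 1) j / g) / g ^ n :=
            ENNReal.div_le_div_right h1 _
        _ = c j * PZ (n + 1) j / g ^ (n + 1) := by
            rw [div_eq_mul_inv, div_eq_mul_inv, div_eq_mul_inv, mul_assoc,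
              ← ENNReal.mul_inv (Or.inr hgntop) (Or.inl hgtop)]
            rw [pow_succ, mul_comm g (g ^ n)]
  have hfun : (fun n => (∫⁻ ω, ENNReal.ofReal ((ω.2 n : ℝ) ^ (-r)) ∂b.P k)
      / ENNReal.ofReal (b.γ k ^ n)) = fun n => ∑' j, a n j := funext hIdef
  have hImono : Monotone fun n => ∑' j, a n j :=
    fun m n h => ENNReal.tsum_le_tsum fun j => hamono j h
  have hAval : ∀ j, (⨆ n, a n j)
      = if k ≤ j then ENNReal.ofReal ((j : ℝ) ^ (-r) * q j) else 0 := by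
    intro j
    by_cases hj : k ≤ j
    · rw [if_pos hj]
      have hx : ∀ n, a n j
          = ENNReal.ofReal ((j : ℝ) ^ (-r) * (b.probZ k n j / γ ^ n)) := by
        intro n
        have hpz : PZ n j = ENNReal.ofReal (b.probZ k n j) := by
          rw [BPRE.probZ, hPcoord n j, ENNReal.ofReal_toReal (hPZ_ne_top n j)]
        rw [ha]
        show c j * PZ n j / g ^ n = _
        rw [hpz, ← hgpow n, hc]
        rw [mul_div_assoc, ← ENNReal.ofReal_div_of_pos (pow_pos hγpos n),
          ← ENNReal.ofReal_mul (Real.rpow_nonneg (Nat.cast_nonneg j) (-r))]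
      have htend : Tendsto (fun n => a n j) atTop
          (𝓝 (ENNReal.ofReal ((j : ℝ) ^ (-r) * q j))) := by
        simp only [hx]
        exact (ENNReal.continuous_ofReal.tendsto _).comp ((hq j hj).const_mul _)
      exact tendsto_nhds_unique (tendsto_atTop_iSup (hamono j)) htend
    · rw [if_neg hj]
      push_neg at hj
      have : ∀ n, a n j = 0 := by
        intro n
        simp [ha, hvanish n j hj]
      simp only [this, iSup_const]
  have hswap : (⨆ n, ∑' j, a n j) = ∑' j, ⨆ n, a n j := by
    have h1 : ∀ n, (∑' j, a n j) = ∫⁻ j, a n j ∂Measure.count := by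
      intro n; rw [lintegral_count]
    have h2 : (∑' j, ⨆ n, a n j) = ∫⁻ j, ⨆ n, a n j ∂Measure.count := by
      rw [lintegral_count]
    simp only [h1, h2]
    rw [lintegral_iSup (fun n => measurable_from_top) ?_]
    intro m n h j
    exact hamono j h
  constructor
  · rw [hfun]; exact hImono
  · rw [hfun]
    have := tendsto_atTop_iSup hImono
    rwa [hswap, tsum_congr hAval] at this
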